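/- Let κ ∈ ℝ, σ > 0, and suppose for each nonzero u the complex number z(u) = a(Pu,u)/⟨x_u, x_u⟩ satisfies Im a(Pu,u) = σ‖∇Pu‖² and Re a(Pu,u) = ‖u‖² - κ²‖∇Pu‖², and that c h^d |x_u|² ≤ ‖u‖² ≤ C h^d |x_u|². Then every z in the field of values of the Laplace-preconditioned matrix satisfies c h^d - (κ²/σ) Im z ≤ Re z ≤ C h^d - (κ²/σ) Im z. -/
import Mathlib


open scoped ComplexInnerProductSpace

/-- Strip bound for the field of values of the Laplace-preconditioned Helmholtz system:
`N u` plays the role of `|x_u|²` (squared Euclidean norm of the coefficient vector),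
`a (P u) u = ‖u‖² - κ²‖∇Pu‖² + iσ‖∇Pu‖²`, and the norm equivalence
`c h^d N u ≤ ‖u‖² ≤ C h^d N u` holds. -/
theorem stmt_8 {V W : Type*} [NormedAddCommGroup V] [InnerProductSpace ℂ V]
    [NormedAddCommGroup W] [InnerProductSpace ℂ W]
    (G : V →ₗ[ℂ] W) (P : V →ₗ[ℂ] V) (κ σ c C h : ℝ) (d : ℕ)
    (hσ : 0 < σ) (hc : 0 < c) (hC : 0 < C) (hh : 0 < h)
    (A : V → ℂ)
    (hIm : ∀ u : V, (A u).im = σ * ‖G (P u)‖^2)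
    (hRe : ∀ u : V, (A u).re = ‖u‖^2 - κ^2 * ‖G (P u)‖^2)
    (N : V → ℝ)
    (hNpos : ∀ u : V, u ≠ 0 → 0 < N u)
    (heq : ∀ u : V, c * h^d * N u ≤ ‖u‖^2 ∧ ‖u‖^2 ≤ C * h^d * N u)
    (u : V) (hu : u ≠ 0) :
    c * h^d - κ^2 / σ * (A u / (N u : ℂ)).im ≤ (A u / (N u : ℂ)).re ∧
      (A u / (N u : ℂ)).re ≤ C * h^d - κ^2 / σ * (A u / (N u : ℂ)).im := by
  have hN : 0 < N u := hNpos u hu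
  have hre : (A u / (N u : ℂ)).re = (A u).re / N u := Complex.div_ofReal_re _ _
  have him : (A u / (N u : ℂ)).im = (A u).im / N u := Complex.div_ofReal_im _ _
  have key : (A u / (N u : ℂ)).re + κ^2 / σ * (A u / (N u : ℂ)).im = ‖u‖^2 / N u := by
    rw [hre, him, hRe, hIm]
    field_simp
    ring
  obtain ⟨h1, h2⟩ := heq u
  constructor
  · have : c * h^d ≤ ‖u‖^2 / N u := by
      rw [le_div_iff₀ hN]; linarith
    linarith [key]
  · have : ‖u‖^2 / N u ≤ C * h^d := by
      rw [div_le_iff₀ hN]; linarith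
    linarith [key]
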